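/- Let μ and ν be probability measures on ℝ with finite second moments, with cumulative distribution functions F and G and quantile functions F⁻¹ and G⁻¹. Then the 2-Wasserstein distance satisfies W₂(μ,ν)² = ∫_0^1 (F⁻¹(r) − G⁻¹(r))² dr. -/

import Mathlib

open MeasureTheory Set ProbabilityTheory Filter
open scoped ENNReal Topology

namespace Stmt19

/-- The master set for the double-integral representation of `(x-y)^2`. -/
def T : Set ((ℝ × ℝ) × ℝ × ℝ) :=
  {z | z.2.1 ≤ z.2.2 ∧ ((z.1.2 ≤ z.2.1 ∧ z.2.2 < z.1.1) ∨ (z.1.1 ≤ z.2.1 ∧ z.2.2 < z.1.2))}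

lemma measT : MeasurableSet T := by
  have hT : T = {z : (ℝ × ℝ) × ℝ × ℝ | z.2.1 ≤ z.2.2} ∩
      (({z : (ℝ × ℝ) × ℝ × ℝ | z.1.2 ≤ z.2.1} ∩ {z : (ℝ × ℝ) × ℝ × ℝ | z.2.2 < z.1.1}) ∪
        ({z : (ℝ × ℝ) × ℝ × ℝ | z.1.1 ≤ z.2.1} ∩ {z : (ℝ × ℝ) × ℝ × ℝ | z.2.2 < z.1.2})) := by
    ext z; simp only [T, mem_setOf_eq, mem_inter_iff, mem_union]
  rw [hT]
  exact MeasurableSet.inter (measurableSet_le (by fun_prop) (by fun_prop))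
    (MeasurableSet.union
      ((measurableSet_le (by fun_prop) (by fun_prop)).inter
        (measurableSet_lt (by fun_prop) (by fun_prop)))
      ((measurableSet_le (by fun_prop) (by fun_prop)).inter
        (measurableSet_lt (by fun_prop) (by fun_prop))))

lemma tri {a b : ℝ} (hab : a ≤ b) :
    volume {p : ℝ × ℝ | a ≤ p.1 ∧ p.1 ≤ p.2 ∧ p.2 < b} = ENNReal.ofReal ((b - a) ^ 2 / 2) := by
  have hS : MeasurableSet {p : ℝ × ℝ | a ≤ p.1 ∧ p.1 ≤ p.2 ∧ p.2 < b} := by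
    have : {p : ℝ × ℝ | a ≤ p.1 ∧ p.1 ≤ p.2 ∧ p.2 < b} =
        {p : ℝ × ℝ | a ≤ p.1} ∩ ({p : ℝ × ℝ | p.1 ≤ p.2} ∩ {p : ℝ × ℝ | p.2 < b}) := by
      ext p; simp [mem_setOf_eq, and_assoc]
    rw [this]
    exact (measurableSet_le (by fun_prop) (by fun_prop)).inter
      ((measurableSet_le (by fun_prop) (by fun_prop)).inter
        (measurableSet_lt (by fun_prop) (by fun_prop)))
  rw [Measure.volume_eq_prod, Measure.prod_apply hS]
  have hsec : ∀ s : ℝ, volume (Prod.mk s ⁻¹' {p : ℝ × ℝ | a ≤ p.1 ∧ p.1 ≤ p.2 ∧ p.2 < b})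
      = ENNReal.ofReal ((Icc a b).indicator (fun s => b - s) s) := by
    intro s
    by_cases h : a ≤ s
    · have : Prod.mk s ⁻¹' {p : ℝ × ℝ | a ≤ p.1 ∧ p.1 ≤ p.2 ∧ p.2 < b} = Ico s b := by
        ext t; simp [mem_setOf_eq, h, Ico, and_comm]
      rw [this, Real.volume_Ico]
      by_cases h2 : s ≤ b
      · rw [indicator_of_mem (mem_Icc.mpr ⟨h, h2⟩)]
      · rw [indicator_of_notMem (by simp [h2])]
        rw [ENNReal.ofReal_of_nonpos (by linarith), ENNReal.ofReal_zero]
    · have : Prod.mk s ⁻¹' {p : ℝ × ℝ | a ≤ p.1 ∧ p.1 ≤ p.2 ∧ p.2 < b} = ∅ := by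
        ext t; simp [mem_setOf_eq, h]
      rw [this, indicator_of_notMem (by simp [h]), measure_empty, ENNReal.ofReal_zero]
  rw [lintegral_congr hsec]
  have hint : Integrable ((Icc a b).indicator (fun s => b - s)) volume := by
    refine (IntegrableOn.integrable_indicator ?_ measurableSet_Icc)
    exact (ContinuousOn.integrableOn_compact isCompact_Icc (by fun_prop))
  have hnn : 0 ≤ᵐ[volume] (Icc a b).indicator (fun s : ℝ => b - s) := by
    refine Eventually.of_forall fun s => ?_
    simp only [Pi.zero_apply]
    by_cases h : s ∈ Icc a b
    · rw [indicator_of_mem h]; linarith [h.2]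
    · rw [indicator_of_notMem h]
  rw [← ofReal_integral_eq_lintegral_ofReal hint hnn]
  congr 1
  rw [integral_indicator measurableSet_Icc]
  rw [MeasureTheory.integral_Icc_eq_integral_Ioc, ← intervalIntegral.integral_of_le hab]
  have h1 : ∫ s in a..b, (b - s) = (b - a) * b - (b ^ 2 - a ^ 2) / 2 := by
    rw [intervalIntegral.integral_sub intervalIntegrable_const intervalIntegral.intervalIntegrable_id]
    rw [intervalIntegral.integral_const, integral_id]
    simp only [smul_eq_mul]
  rw [h1]; ring


lemma vol_slice (x y : ℝ) :
    volume {p : ℝ × ℝ | ((x, y), p) ∈ T} = ENNReal.ofReal ((x - y) ^ 2 / 2) := by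
  rcases le_total y x with h | h
  · have hset : {p : ℝ × ℝ | ((x, y), p) ∈ T} = {p : ℝ × ℝ | y ≤ p.1 ∧ p.1 ≤ p.2 ∧ p.2 < x} := by
      ext p
      simp only [T, mem_setOf_eq]
      constructor
      · rintro ⟨h12, ⟨h1, h2⟩ | ⟨h1, h2⟩⟩
        · exact ⟨h1, h12, h2⟩
        · exact absurd (h1.trans h12) (not_le.2 (h2.trans_le h))
      · rintro ⟨h1, h2, h3⟩
        exact ⟨h2, Or.inl ⟨h1, h3⟩⟩
    rw [hset, tri h]
  · have hset : {p : ℝ × ℝ | ((x, y), p) ∈ T} = {p : ℝ × ℝ | x ≤ p.1 ∧ p.1 ≤ p.2 ∧ p.2 < y} := by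
      ext p
      simp only [T, mem_setOf_eq]
      constructor
      · rintro ⟨h12, ⟨h1, h2⟩ | ⟨h1, h2⟩⟩
        · exact absurd (h1.trans h12) (not_le.2 (h2.trans_le h))
        · exact ⟨h1, h12, h2⟩
      · rintro ⟨h1, h2, h3⟩
        exact ⟨h2, Or.inr ⟨h1, h3⟩⟩
    rw [hset, tri h]
    congr 1
    ring

lemma lint_eq (κ : Measure (ℝ × ℝ)) [SFinite κ] :
    ∫⁻ q, ENNReal.ofReal ((q.1 - q.2) ^ 2) ∂κ = 2 * ∫⁻ p, κ {q | (q, p) ∈ T} := by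
  have hmi : Measurable (T.indicator (1 : (ℝ × ℝ) × ℝ × ℝ → ℝ≥0∞)) :=
    measurable_const.indicator measT
  have step1 : ∀ q : ℝ × ℝ, ENNReal.ofReal ((q.1 - q.2) ^ 2)
      = 2 * ∫⁻ p, T.indicator 1 (q, p) ∂volume := by
    intro q
    have hsec : MeasurableSet (Prod.mk q ⁻¹' T) := measT.preimage measurable_prodMk_left
    have h1 : (fun p => T.indicator (1 : (ℝ × ℝ) × ℝ × ℝ → ℝ≥0∞) (q, p))
        = (Prod.mk q ⁻¹' T).indicator 1 := by
      ext p
      by_cases h : (q, p) ∈ T <;> simp [Set.indicator, h]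
    rw [h1, lintegral_indicator hsec]
    simp only [Pi.one_apply, setLIntegral_one]
    have h2 : Prod.mk q ⁻¹' T = {p : ℝ × ℝ | ((q.1, q.2), p) ∈ T} := by
      ext p; simp only [mem_preimage, mem_setOf_eq, Prod.mk.eta]
    rw [h2, vol_slice]
    rw [show ((q.1 - q.2) ^ 2 : ℝ) = 2 * ((q.1 - q.2) ^ 2 / 2) by ring,
      ENNReal.ofReal_mul (by norm_num)]
    norm_num
  calc ∫⁻ q, ENNReal.ofReal ((q.1 - q.2) ^ 2) ∂κ
      = ∫⁻ q, 2 * ∫⁻ p, T.indicator 1 (q, p) ∂volume ∂κ := lintegral_congr step1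
    _ = 2 * ∫⁻ q, ∫⁻ p, T.indicator 1 (q, p) ∂volume ∂κ :=
        lintegral_const_mul' _ _ (by norm_num)
    _ = 2 * ∫⁻ p, ∫⁻ q, T.indicator 1 (q, p) ∂κ ∂volume := by
        rw [lintegral_lintegral_swap]
        exact (hmi.comp measurable_id).aemeasurable
    _ = 2 * ∫⁻ p, κ {q | (q, p) ∈ T} := by
        congr 1
        refine lintegral_congr fun p => ?_
        have hsec : MeasurableSet {q : ℝ × ℝ | (q, p) ∈ T} :=
          measT.preimage (measurable_prodMk_right)
        have h1 : (fun q => T.indicator (1 : (ℝ × ℝ) × ℝ × ℝ → ℝ≥0∞) (q, p))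
            = ({q : ℝ × ℝ | (q, p) ∈ T}).indicator 1 := by
          ext q
          by_cases h : (q, p) ∈ T <;> simp [Set.indicator, h]
        rw [h1, lintegral_indicator hsec]
        simp only [Pi.one_apply, setLIntegral_one]

lemma vol_between {S : Set ℝ} {a b : ℝ} (h1 : Ioo a b ⊆ S) (h2 : S ⊆ Ioc a b) :
    volume S = ENNReal.ofReal (b - a) := by
  apply le_antisymm
  · calc volume S ≤ volume (Ioc a b) := measure_mono h2
      _ = ENNReal.ofReal (b - a) := Real.volume_Ioc
  · calc ENNReal.ofReal (b - a) = volume (Ioo a b) := Real.volume_Ioo.symm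
      _ ≤ volume S := measure_mono h1

lemma vol_inter {a b : ℝ} (ha : 0 ≤ a) (hb : b ≤ 1) :
    volume (Ioc a b ∩ Ioo (0 : ℝ) 1) = ENNReal.ofReal (b - a) := by
  rcases le_or_gt b a with h | h
  · rw [Ioc_eq_empty (not_lt.mpr h), empty_inter, measure_empty,
      ENNReal.ofReal_of_nonpos (by linarith)]
  · refine vol_between (fun r hr => ⟨⟨hr.1, hr.2.le⟩, ⟨lt_of_le_of_lt ha hr.1, lt_of_lt_of_le hr.2 hb⟩⟩)
      fun r hr => hr.1

lemma q_nonempty (μ : Measure ℝ) [IsProbabilityMeasure μ] {r : ℝ} (hr : r < 1) :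
    {x : ℝ | r ≤ (μ (Iic x)).toReal}.Nonempty := by
  have h := tendsto_cdf_atTop (μ := μ)
  obtain ⟨x, hx⟩ := (h.eventually (eventually_ge_nhds hr)).exists
  exact ⟨x, by rwa [cdf_eq_real, measureReal_def] at hx⟩

lemma q_bdd (μ : Measure ℝ) [IsProbabilityMeasure μ] {r : ℝ} (hr : 0 < r) :
    BddBelow {x : ℝ | r ≤ (μ (Iic x)).toReal} := by
  have h := tendsto_cdf_atBot (μ := μ)
  obtain ⟨x₀, hx₀⟩ := eventually_atBot.mp (h.eventually (eventually_lt_nhds hr))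
  refine ⟨x₀, fun x hx => ?_⟩
  by_contra hc
  push_neg at hc
  have h2 := hx₀ x hc.le
  rw [cdf_eq_real, measureReal_def] at h2
  exact absurd hx (not_le.mpr h2)

lemma galois (μ : Measure ℝ) [IsProbabilityMeasure μ] {r : ℝ} (hr : r ∈ Ioo (0:ℝ) 1) (x : ℝ) :
    sInf {y : ℝ | r ≤ (μ (Iic y)).toReal} ≤ x ↔ r ≤ (μ (Iic x)).toReal := by
  have hne := q_nonempty μ hr.2
  have hbdd := q_bdd μ hr.1
  constructor
  · intro h
    have key : r ≤ cdf μ (sInf {y : ℝ | r ≤ (μ (Iic y)).toReal}) := by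
      set c := sInf {y : ℝ | r ≤ (μ (Iic y)).toReal} with hc
      have hev : ∀ᶠ y in 𝓝[>] c, r ≤ cdf μ y := by
        filter_upwards [self_mem_nhdsWithin] with y hy
        obtain ⟨z, hz, hzy⟩ := (csInf_lt_iff hbdd hne).mp hy
        calc r ≤ (μ (Iic z)).toReal := hz
          _ = cdf μ z := (by rw [cdf_eq_real, measureReal_def])
          _ ≤ cdf μ y := monotone_cdf (μ := μ) hzy.le
      have hcont : Tendsto (cdf μ) (𝓝[>] c) (𝓝 (cdf μ c)) :=
        ((cdf μ).right_continuous c).mono_left (nhdsWithin_mono _ Ioi_subset_Ici_self)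
      exact ge_of_tendsto hcont hev
    rw [cdf_eq_real, measureReal_def] at key
    refine key.trans (ENNReal.toReal_mono (measure_ne_top _ _)
      (measure_mono (Iic_subset_Iic.mpr h)))
  · intro h
    exact csInf_le hbdd h

lemma Fi_mono (μ : Measure ℝ) [IsProbabilityMeasure μ] :
    MonotoneOn (fun r : ℝ => sInf {x : ℝ | r ≤ (μ (Iic x)).toReal}) (Ioo (0:ℝ) 1) := by
  intro r1 h1 r2 h2 h12
  exact csInf_le_csInf (q_bdd μ h1.1) (q_nonempty μ h2.2) fun x hx => h12.trans hx

lemma map_eq (μ : Measure ℝ) [IsProbabilityMeasure μ] :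
    (volume.restrict (Ioo (0:ℝ) 1)).map (fun r => sInf {x : ℝ | r ≤ (μ (Iic x)).toReal}) = μ := by
  have hmeas : AEMeasurable (fun r : ℝ => sInf {x : ℝ | r ≤ (μ (Iic x)).toReal})
      (volume.restrict (Ioo (0:ℝ) 1)) :=
    aemeasurable_restrict_of_monotoneOn measurableSet_Ioo (Fi_mono μ)
  haveI : IsProbabilityMeasure (volume.restrict (Ioo (0:ℝ) 1)) := ⟨by simp [Real.volume_Ioo]⟩
  haveI : IsProbabilityMeasure ((volume.restrict (Ioo (0:ℝ) 1)).map
      (fun r => sInf {x : ℝ | r ≤ (μ (Iic x)).toReal})) := by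
    refine Measure.isProbabilityMeasure_map hmeas
  refine Measure.ext_of_Iic _ _ fun x => ?_
  rw [Measure.map_apply_of_aemeasurable hmeas measurableSet_Iic,
    Measure.restrict_apply' measurableSet_Ioo]
  have hx1 : (μ (Iic x)).toReal ≤ 1 := by
    have h := prob_le_one (μ := μ) (s := Iic x)
    calc (μ (Iic x)).toReal ≤ (1 : ℝ≥0∞).toReal := ENNReal.toReal_mono ENNReal.one_ne_top h
      _ = 1 := ENNReal.toReal_one
  have hset : (fun r : ℝ => sInf {x : ℝ | r ≤ (μ (Iic x)).toReal}) ⁻¹' Iic x ∩ Ioo 0 1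
      = Ioc (0 : ℝ) ((μ (Iic x)).toReal) ∩ Ioo (0:ℝ) 1 := by
    ext r
    simp only [mem_inter_iff, mem_preimage, mem_Iic, mem_Ioc, mem_Ioo]
    constructor
    · rintro ⟨h1, hr⟩
      exact ⟨⟨hr.1, (galois μ ⟨hr.1, hr.2⟩ x).mp h1⟩, hr⟩
    · rintro ⟨h1, hr⟩
      exact ⟨(galois μ ⟨hr.1, hr.2⟩ x).mpr h1.2, hr⟩
  rw [hset, vol_inter le_rfl hx1, sub_zero, ENNReal.ofReal_toReal (measure_ne_top _ _)]

lemma sec_compare (μ ν : Measure ℝ) [IsProbabilityMeasure μ] [IsProbabilityMeasure ν]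
    (Finv Ginv : ℝ → ℝ)
    (hF : ∀ r, Finv r = sInf {x : ℝ | r ≤ (μ (Iic x)).toReal})
    (hG : ∀ r, Ginv r = sInf {x : ℝ | r ≤ (ν (Iic x)).toReal})
    (γ : Measure (ℝ × ℝ)) (hγ1 : γ.map Prod.fst = μ) (hγ2 : γ.map Prod.snd = ν)
    (p : ℝ × ℝ) :
    (volume.restrict (Ioo (0:ℝ) 1)).map (fun r => (Finv r, Ginv r)) {q | (q, p) ∈ T}
      ≤ γ {q | (q, p) ∈ T} := by
  obtain ⟨s, t⟩ := p
  have hFe : Finv = fun r => sInf {x : ℝ | r ≤ (μ (Iic x)).toReal} := funext hF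
  have hGe : Ginv = fun r => sInf {x : ℝ | r ≤ (ν (Iic x)).toReal} := funext hG
  have hFm : AEMeasurable Finv (volume.restrict (Ioo (0:ℝ) 1)) := by
    rw [hFe]; exact aemeasurable_restrict_of_monotoneOn measurableSet_Ioo (Fi_mono μ)
  have hGm : AEMeasurable Ginv (volume.restrict (Ioo (0:ℝ) 1)) := by
    rw [hGe]; exact aemeasurable_restrict_of_monotoneOn measurableSet_Ioo (Fi_mono ν)
  have hpair : AEMeasurable (fun r => (Finv r, Ginv r)) (volume.restrict (Ioo (0:ℝ) 1)) :=
    hFm.prodMk hGm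
  have hsecm : MeasurableSet {q : ℝ × ℝ | (q, (s, t)) ∈ T} :=
    measT.preimage measurable_prodMk_right
  rw [Measure.map_apply_of_aemeasurable hpair hsecm]
  by_cases hst : s ≤ t
  · -- main case
    have hsplit : (fun r => (Finv r, Ginv r)) ⁻¹' {q : ℝ × ℝ | (q, (s, t)) ∈ T}
        = {r | Ginv r ≤ s ∧ t < Finv r} ∪ {r | Finv r ≤ s ∧ t < Ginv r} := by
      ext r
      simp only [mem_preimage, mem_setOf_eq, T, mem_union, hst, true_and]
    have hgal : ∀ r ∈ Ioo (0:ℝ) 1, ∀ x : ℝ,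
        (Finv r ≤ x ↔ r ≤ (μ (Iic x)).toReal) ∧ (Ginv r ≤ x ↔ r ≤ (ν (Iic x)).toReal) := by
      intro r hr x
      rw [hF, hG]
      exact ⟨galois μ hr x, galois ν hr x⟩
    have hA : (volume.restrict (Ioo (0:ℝ) 1)) {r | Ginv r ≤ s ∧ t < Finv r}
        = ν (Iic s) - μ (Iic t) := by
      rw [Measure.restrict_apply' measurableSet_Ioo]
      have hset : {r | Ginv r ≤ s ∧ t < Finv r} ∩ Ioo 0 1
          = Ioc ((μ (Iic t)).toReal) ((ν (Iic s)).toReal) ∩ Ioo (0:ℝ) 1 := by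
        ext r
        simp only [mem_inter_iff, mem_setOf_eq, mem_Ioc, mem_Ioo]
        constructor
        · rintro ⟨⟨h1, h2⟩, hr⟩
          refine ⟨⟨?_, ((hgal r hr s).2).mp h1⟩, hr⟩
          by_contra hc
          push_neg at hc
          exact absurd (((hgal r hr t).1).mpr hc) (not_le.mpr h2)
        · rintro ⟨⟨h1, h2⟩, hr⟩
          refine ⟨⟨((hgal r hr s).2).mpr h2, ?_⟩, hr⟩
          by_contra hc
          push_neg at hc
          exact absurd (((hgal r hr t).1).mp hc) (not_le.mpr h1)
      rw [hset, vol_inter ENNReal.toReal_nonneg (by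
          calc (ν (Iic s)).toReal ≤ (1 : ℝ≥0∞).toReal :=
            ENNReal.toReal_mono ENNReal.one_ne_top prob_le_one
          _ = 1 := ENNReal.toReal_one),
        ENNReal.ofReal_sub _ ENNReal.toReal_nonneg,
        ENNReal.ofReal_toReal (measure_ne_top _ _), ENNReal.ofReal_toReal (measure_ne_top _ _)]
    have hB : (volume.restrict (Ioo (0:ℝ) 1)) {r | Finv r ≤ s ∧ t < Ginv r}
        = μ (Iic s) - ν (Iic t) := by
      rw [Measure.restrict_apply' measurableSet_Ioo]
      have hset : {r | Finv r ≤ s ∧ t < Ginv r} ∩ Ioo 0 1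
          = Ioc ((ν (Iic t)).toReal) ((μ (Iic s)).toReal) ∩ Ioo (0:ℝ) 1 := by
        ext r
        simp only [mem_inter_iff, mem_setOf_eq, mem_Ioc, mem_Ioo]
        constructor
        · rintro ⟨⟨h1, h2⟩, hr⟩
          refine ⟨⟨?_, ((hgal r hr s).1).mp h1⟩, hr⟩
          by_contra hc
          push_neg at hc
          exact absurd (((hgal r hr t).2).mpr hc) (not_le.mpr h2)
        · rintro ⟨⟨h1, h2⟩, hr⟩
          refine ⟨⟨((hgal r hr s).1).mpr h2, ?_⟩, hr⟩
          by_contra hc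
          push_neg at hc
          exact absurd (((hgal r hr t).2).mp hc) (not_le.mpr h1)
      rw [hset, vol_inter ENNReal.toReal_nonneg (by
          calc (μ (Iic s)).toReal ≤ (1 : ℝ≥0∞).toReal :=
            ENNReal.toReal_mono ENNReal.one_ne_top prob_le_one
          _ = 1 := ENNReal.toReal_one),
        ENNReal.ofReal_sub _ ENNReal.toReal_nonneg,
        ENNReal.ofReal_toReal (measure_ne_top _ _), ENNReal.ofReal_toReal (measure_ne_top _ _)]
    -- gamma side
    set A := {q : ℝ × ℝ | q.2 ≤ s ∧ t < q.1} with hAdef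
    set B := {q : ℝ × ℝ | q.1 ≤ s ∧ t < q.2} with hBdef
    have hAm : MeasurableSet A := by
      have : A = Prod.snd ⁻¹' Iic s ∩ Prod.fst ⁻¹' Ioi t := by
        ext q; simp [hAdef, mem_setOf_eq]
      rw [this]
      exact (measurable_snd measurableSet_Iic).inter (measurable_fst measurableSet_Ioi)
    have hBm : MeasurableSet B := by
      have : B = Prod.fst ⁻¹' Iic s ∩ Prod.snd ⁻¹' Ioi t := by
        ext q; simp [hBdef, mem_setOf_eq]
      rw [this]
      exact (measurable_fst measurableSet_Iic).inter (measurable_snd measurableSet_Ioi)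
    have hdisj : Disjoint A B := by
      rw [disjoint_left]
      rintro q ⟨hq1, hq2⟩ ⟨hq3, hq4⟩
      exact absurd (lt_of_lt_of_le hq4 hq1) (not_lt.mpr hst)
    have hμt : γ (Prod.fst ⁻¹' Iic t) = μ (Iic t) := by
      rw [← hγ1, Measure.map_apply measurable_fst measurableSet_Iic]
    have hμs : γ (Prod.fst ⁻¹' Iic s) = μ (Iic s) := by
      rw [← hγ1, Measure.map_apply measurable_fst measurableSet_Iic]
    have hνt : γ (Prod.snd ⁻¹' Iic t) = ν (Iic t) := by
      rw [← hγ2, Measure.map_apply measurable_snd measurableSet_Iic]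
    have hνs : γ (Prod.snd ⁻¹' Iic s) = ν (Iic s) := by
      rw [← hγ2, Measure.map_apply measurable_snd measurableSet_Iic]
    have hγA : ν (Iic s) - μ (Iic t) ≤ γ A := by
      rw [tsub_le_iff_right, ← hνs, ← hμt]
      refine le_trans (measure_mono ?_) (measure_union_le A (Prod.fst ⁻¹' Iic t))
      intro q hq
      rcases le_or_gt q.1 t with h | h
      · exact Or.inr h
      · exact Or.inl ⟨hq, h⟩
    have hγB : μ (Iic s) - ν (Iic t) ≤ γ B := by
      rw [tsub_le_iff_right, ← hμs, ← hνt]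
      refine le_trans (measure_mono ?_) (measure_union_le B (Prod.snd ⁻¹' Iic t))
      intro q hq
      rcases le_or_gt q.2 t with h | h
      · exact Or.inr h
      · exact Or.inl ⟨hq, h⟩
    have hsub : A ∪ B ⊆ {q : ℝ × ℝ | (q, (s, t)) ∈ T} := by
      rintro q (hq | hq)
      · exact ⟨hst, Or.inl hq⟩
      · exact ⟨hst, Or.inr hq⟩
    calc (volume.restrict (Ioo (0:ℝ) 1)) ((fun r => (Finv r, Ginv r)) ⁻¹' {q : ℝ × ℝ | (q, (s, t)) ∈ T})
        ≤ (volume.restrict (Ioo (0:ℝ) 1)) {r | Ginv r ≤ s ∧ t < Finv r}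
          + (volume.restrict (Ioo (0:ℝ) 1)) {r | Finv r ≤ s ∧ t < Ginv r} := by
          rw [hsplit]; exact measure_union_le _ _
      _ = (ν (Iic s) - μ (Iic t)) + (μ (Iic s) - ν (Iic t)) := by rw [hA, hB]
      _ ≤ γ A + γ B := add_le_add hγA hγB
      _ = γ (A ∪ B) := (measure_union hdisj hBm).symm
      _ ≤ γ {q : ℝ × ℝ | (q, (s, t)) ∈ T} := measure_mono hsub
  · have hempty : (fun r => (Finv r, Ginv r)) ⁻¹' {q : ℝ × ℝ | (q, (s, t)) ∈ T} = ∅ := by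
      ext r
      simp only [mem_preimage, mem_setOf_eq, T, mem_empty_iff_false, iff_false, not_and]
      intro h
      exact absurd h hst
    rw [hempty]
    simp

end Stmt19

open Stmt19 in
theorem stmt19 (μ ν : Measure ℝ) [IsProbabilityMeasure μ] [IsProbabilityMeasure ν]
    (hμ2 : Integrable (fun x => x ^ 2) μ) (hν2 : Integrable (fun x => x ^ 2) ν)
    (Finv Ginv : ℝ → ℝ)
    (hF : ∀ r, Finv r = sInf {x : ℝ | r ≤ (μ (Set.Iic x)).toReal})
    (hG : ∀ r, Ginv r = sInf {x : ℝ | r ≤ (ν (Set.Iic x)).toReal}) :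
    (⨅ γ ∈ {γ : Measure (ℝ × ℝ) |
        γ.map Prod.fst = μ ∧ γ.map Prod.snd = ν},
      ∫⁻ q, ENNReal.ofReal ((q.1 - q.2) ^ 2) ∂γ)
      = ∫⁻ r in Set.Ioo (0 : ℝ) 1, ENNReal.ofReal ((Finv r - Ginv r) ^ 2) := by
  classical
  have hFe : Finv = fun r => sInf {x : ℝ | r ≤ (μ (Iic x)).toReal} := funext hF
  have hGe : Ginv = fun r => sInf {x : ℝ | r ≤ (ν (Iic x)).toReal} := funext hG
  haveI hu : IsProbabilityMeasure (volume.restrict (Ioo (0:ℝ) 1)) :=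
    ⟨by simp [Real.volume_Ioo]⟩
  have hFm : AEMeasurable Finv (volume.restrict (Ioo (0:ℝ) 1)) := by
    rw [hFe]; exact aemeasurable_restrict_of_monotoneOn measurableSet_Ioo (Fi_mono μ)
  have hGm : AEMeasurable Ginv (volume.restrict (Ioo (0:ℝ) 1)) := by
    rw [hGe]; exact aemeasurable_restrict_of_monotoneOn measurableSet_Ioo (Fi_mono ν)
  have hpair : AEMeasurable (fun r => (Finv r, Ginv r)) (volume.restrict (Ioo (0:ℝ) 1)) :=
    hFm.prodMk hGm
  set γ0 : Measure (ℝ × ℝ) := (volume.restrict (Ioo (0:ℝ) 1)).map (fun r => (Finv r, Ginv r))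
    with hγ0
  haveI : IsProbabilityMeasure γ0 := Measure.isProbabilityMeasure_map hpair
  have hmem : γ0 ∈ {γ : Measure (ℝ × ℝ) | γ.map Prod.fst = μ ∧ γ.map Prod.snd = ν} := by
    constructor
    · rw [hγ0, AEMeasurable.map_map_of_aemeasurable measurable_fst.aemeasurable hpair]
      have h1 : (Prod.fst ∘ fun r => (Finv r, Ginv r)) = Finv := rfl
      rw [h1, hFe, map_eq μ]
    · rw [hγ0, AEMeasurable.map_map_of_aemeasurable measurable_snd.aemeasurable hpair]
      have h1 : (Prod.snd ∘ fun r => (Finv r, Ginv r)) = Ginv := rfl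
      rw [h1, hGe, map_eq ν]
  have hlint0 : ∫⁻ q, ENNReal.ofReal ((q.1 - q.2) ^ 2) ∂γ0
      = ∫⁻ r in Set.Ioo (0 : ℝ) 1, ENNReal.ofReal ((Finv r - Ginv r) ^ 2) := by
    rw [hγ0, lintegral_map' ?_ hpair]
    exact ((measurable_fst.sub measurable_snd).pow_const 2).ennreal_ofReal.aemeasurable
  apply le_antisymm
  · exact le_trans (iInf₂_le γ0 hmem) hlint0.le
  · refine le_iInf₂ fun γ hγ => ?_
    obtain ⟨hγ1, hγ2⟩ := hγ
    haveI : IsProbabilityMeasure γ := by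
      constructor
      have h1 := congrArg (fun m : Measure ℝ => m univ) hγ1
      simpa [Measure.map_apply measurable_fst MeasurableSet.univ] using h1
    rw [← hlint0, lint_eq γ0, lint_eq γ]
    exact mul_le_mul_right (lintegral_mono fun p =>
      sec_compare μ ν Finv Ginv hF hG γ hγ1 hγ2 p) 2
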